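/- The polynomial p(n) = (n² − 13)(n² − 17)(n² − 221) has a root modulo m for every positive integer m; that is, for every m ≥ 1 there exists an integer n with p(n) ≡ 0 (mod m). -/

import Mathlib

/-- Hensel lifting for square roots modulo odd prime powers. -/
lemma hensel_odd (p : ℕ) (hp : p.Prime) (hp2 : p ≠ 2) (a : ℤ) (ha : ¬ (p : ℤ) ∣ a)
    (h1 : ∃ n : ℤ, (p : ℤ) ∣ n ^ 2 - a) :
    ∀ k : ℕ, ∃ n : ℤ, ((p : ℤ)) ^ k ∣ n ^ 2 - a := by
  haveI : Fact p.Prime := ⟨hp⟩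
  intro k
  cases k with
  | zero => exact ⟨0, by simp⟩
  | succ k =>
    induction k with
    | zero => simpa using h1
    | succ k ih =>
      obtain ⟨n, hn⟩ := ih
      obtain ⟨c, hc⟩ := hn
      have hpn : ¬ (p : ℤ) ∣ n := by
        intro h
        apply ha
        have h2 : (p : ℤ) ∣ n ^ 2 - a := by
          have : (p : ℤ) ∣ (p : ℤ) ^ (k + 1) := dvd_pow_self _ (by omega)
          exact this.trans ⟨c, hc⟩
        have h3 : (p : ℤ) ∣ n ^ 2 := by
          have := h.mul_right n; simpa [sq] using this
        simpa using (dvd_sub h3 h2)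
      have hp2n : ¬ (p : ℤ) ∣ 2 * n := by
        intro h
        rcases (Int.Prime.dvd_mul' (by exact_mod_cast hp) h) with h' | h'
        · have h2 : p ∣ 2 := by exact_mod_cast h'
          have := Nat.le_of_dvd (by norm_num) h2
          have := hp.two_le
          omega
        · exact hpn h'
      set u : ZMod p := ((2 * n : ℤ) : ZMod p) with hu
      have hu0 : u ≠ 0 := by
        rw [hu, Ne, ZMod.intCast_zmod_eq_zero_iff_dvd]
        exact_mod_cast hp2n
      set t : ℤ := (((-(c : ZMod p) * u⁻¹ : ZMod p)).val : ℤ) with ht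
      have htc : ((c + 2 * n * t : ℤ) : ZMod p) = 0 := by
        push_cast [ht]
        rw [ZMod.natCast_val, ZMod.cast_id]
        field_simp
        rw [hu]
        push_cast
        ring
      obtain ⟨d, hd⟩ : (p : ℤ) ∣ c + 2 * n * t := by
        rwa [ZMod.intCast_zmod_eq_zero_iff_dvd] at htc
      refine ⟨n + t * (p : ℤ) ^ (k + 1), ⟨d + t ^ 2 * (p : ℤ) ^ k, ?_⟩⟩
      linear_combination hc + (p : ℤ) ^ (k + 1) * hd

/-- Square roots of 17 modulo powers of 2. -/
lemma two_pow_case : ∀ k : ℕ, ∃ n : ℤ, Odd n ∧ (2 : ℤ) ^ k ∣ n ^ 2 - 17 := by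
  intro k
  induction k with
  | zero => exact ⟨1, odd_one, by norm_num⟩
  | succ k ih =>
    obtain ⟨n, hodd, hn⟩ := ih
    by_cases h : (2 : ℤ) ^ (k + 1) ∣ n ^ 2 - 17
    · exact ⟨n, hodd, h⟩
    · have h8 : (8 : ℤ) ∣ n ^ 2 - 17 := by
        obtain ⟨m, rfl⟩ := hodd
        obtain ⟨e, he⟩ := Int.even_mul_succ_self m
        exact ⟨e - 2, by linear_combination 4 * he⟩
      have hk3 : 3 ≤ k := by
        by_contra hk
        apply h
        calc (2 : ℤ) ^ (k + 1) ∣ (8 : ℤ) := by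
              have : (2 : ℤ) ^ (k + 1) ∣ (2 : ℤ) ^ 3 := pow_dvd_pow 2 (by omega)
              simpa using this
          _ ∣ n ^ 2 - 17 := h8
      obtain ⟨j, rfl⟩ : ∃ j, k = j + 3 := ⟨k - 3, by omega⟩
      obtain ⟨c, hc⟩ := hn
      have hcodd : Odd c := by
        rcases Int.even_or_odd c with ⟨e, he⟩ | hco
        · exact absurd ⟨e, by rw [hc, he]; ring⟩ h
        · exact hco
      obtain ⟨e, he⟩ : ∃ e, c + n + 2 ^ (j + 1) = 2 * e := by
        obtain ⟨x, hx⟩ := hodd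
        obtain ⟨y, hy⟩ := hcodd
        exact ⟨x + y + 1 + 2 ^ j, by rw [hx, hy]; ring⟩
      refine ⟨n + 2 ^ (j + 2), ?_, ⟨e, ?_⟩⟩
      · exact hodd.add_even ⟨2 ^ (j + 1), by ring⟩
      · linear_combination hc + 2 ^ (j + 3) * he

lemma prime_pow_case (p k : ℕ) (hp : p.Prime) :
    ∃ n : ℤ, ((p : ℤ)) ^ k ∣ (n ^ 2 - 13) * (n ^ 2 - 17) * (n ^ 2 - 221) := by
  haveI : Fact p.Prime := ⟨hp⟩
  by_cases hp2 : p = 2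
  · subst hp2
    obtain ⟨n, -, hn⟩ := two_pow_case k
    exact ⟨n, hn.trans ⟨(n ^ 2 - 13) * (n ^ 2 - 221), by ring⟩⟩
  · -- odd prime: find a ∈ {13, 17, 221} which is a QR mod p with p ∤ a
    suffices h : ∃ a : ℤ, (a = 13 ∨ a = 17 ∨ a = 221) ∧ ¬ (p : ℤ) ∣ a ∧
        (∃ n : ℤ, (p : ℤ) ∣ n ^ 2 - a) by
      obtain ⟨a, hmem, ha, hbase⟩ := h
      obtain ⟨n, hn⟩ := hensel_odd p hp hp2 a ha hbase k
      rcases hmem with rfl | rfl | rfl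
      · exact ⟨n, hn.trans ⟨(n ^ 2 - 17) * (n ^ 2 - 221), by ring⟩⟩
      · exact ⟨n, hn.trans ⟨(n ^ 2 - 13) * (n ^ 2 - 221), by ring⟩⟩
      · exact ⟨n, hn.trans ⟨(n ^ 2 - 13) * (n ^ 2 - 17), by ring⟩⟩
    by_cases h13 : (13 : ZMod p) = 0
    · -- p = 13, use a = 17 with n = 2
      have hp13 : p = 13 := by
        have : (p : ℕ) ∣ 13 := by
          have : ((13 : ℕ) : ZMod p) = 0 := by exact_mod_cast h13
          exact (ZMod.natCast_eq_zero_iff _ _).mp this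
        exact (Nat.prime_dvd_prime_iff_eq hp (by norm_num)).mp this
      subst hp13
      exact ⟨17, Or.inr (Or.inl rfl), by norm_num, ⟨2, by norm_num⟩⟩
    by_cases h17 : (17 : ZMod p) = 0
    · have hp17 : p = 17 := by
        have : (p : ℕ) ∣ 17 := by
          have : ((17 : ℕ) : ZMod p) = 0 := by exact_mod_cast h17
          exact (ZMod.natCast_eq_zero_iff _ _).mp this
        exact (Nat.prime_dvd_prime_iff_eq hp (by norm_num)).mp this
      subst hp17
      exact ⟨13, Or.inl rfl, by norm_num, ⟨8, by norm_num⟩⟩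
    -- p ∤ 13, p ∤ 17
    have hnd13 : ¬ (p : ℤ) ∣ 13 := by
      rw [show ((13 : ℤ)) = ((13 : ℕ) : ℤ) by norm_num, Int.natCast_dvd_natCast]
      intro h; exact h13 (by exact_mod_cast (ZMod.natCast_eq_zero_iff 13 p).mpr h)
    have hnd17 : ¬ (p : ℤ) ∣ 17 := by
      rw [show ((17 : ℤ)) = ((17 : ℕ) : ℤ) by norm_num, Int.natCast_dvd_natCast]
      intro h; exact h17 (by exact_mod_cast (ZMod.natCast_eq_zero_iff 17 p).mpr h)
    have sqlift : ∀ a : ℤ, IsSquare ((a : ZMod p)) → ∃ n : ℤ, (p : ℤ) ∣ n ^ 2 - a := by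
      intro a ⟨x, hx⟩
      refine ⟨(x.val : ℤ), ?_⟩
      rw [← ZMod.intCast_zmod_eq_zero_iff_dvd]
      push_cast
      rw [ZMod.natCast_val, ZMod.cast_id, hx]
      ring
    by_cases hs13 : IsSquare (13 : ZMod p)
    · exact ⟨13, Or.inl rfl, hnd13, sqlift 13 (by exact_mod_cast hs13)⟩
    by_cases hs17 : IsSquare (17 : ZMod p)
    · exact ⟨17, Or.inr (Or.inl rfl), hnd17, sqlift 17 (by exact_mod_cast hs17)⟩
    -- both nonsquares: 221 = 13 * 17 is a square
    have hchar : ringChar (ZMod p) ≠ 2 := by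
      rw [ZMod.ringChar_zmod_n]; exact hp2
    have h221 : (221 : ZMod p) ≠ 0 := by
      have : (221 : ZMod p) = 13 * 17 := by norm_num
      rw [this]
      exact mul_ne_zero h13 h17
    have hq : quadraticChar (ZMod p) (221 : ZMod p) = 1 := by
      have : (221 : ZMod p) = 13 * 17 := by norm_num
      rw [this, map_mul,
        quadraticChar_neg_one_iff_not_isSquare.mpr hs13,
        quadraticChar_neg_one_iff_not_isSquare.mpr hs17]
      ring
    have hs221 : IsSquare (221 : ZMod p) :=
      (quadraticChar_one_iff_isSquare h221).mp hq
    have hnd221 : ¬ (p : ℤ) ∣ 221 := by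
      intro h
      apply h221
      have : ((221 : ℕ) : ZMod p) = 0 := by
        rw [ZMod.natCast_eq_zero_iff]
        exact_mod_cast h
      exact_mod_cast this
    exact ⟨221, Or.inr (Or.inr rfl), hnd221, sqlift 221 (by exact_mod_cast hs221)⟩

lemma zmod_version : ∀ m : ℕ, m ≠ 0 →
    ∃ x : ZMod m, (x ^ 2 - 13) * (x ^ 2 - 17) * (x ^ 2 - 221) = 0 := by
  apply Nat.recOnPosPrimePosCoprime
    (motive := fun m => m ≠ 0 → ∃ x : ZMod m, (x ^ 2 - 13) * (x ^ 2 - 17) * (x ^ 2 - 221) = 0)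
  · -- prime powers
    intro p k hp hk _
    obtain ⟨n, hn⟩ := prime_pow_case p k hp
    refine ⟨(n : ZMod (p ^ k)), ?_⟩
    have : ((((n ^ 2 - 13) * (n ^ 2 - 17) * (n ^ 2 - 221) : ℤ)) : ZMod (p ^ k)) = 0 := by
      rw [ZMod.intCast_zmod_eq_zero_iff_dvd]
      exact_mod_cast hn
    push_cast at this
    convert this using 2 <;> push_cast <;> ring
  · intro h; exact absurd rfl h
  · intro _
    exact ⟨0, Subsingleton.elim _ _⟩
  · -- coprime multiplication
    intro a b ha hb hab Pa Pb _
    obtain ⟨x₁, hx₁⟩ := Pa (by omega)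
    obtain ⟨x₂, hx₂⟩ := Pb (by omega)
    let e := ZMod.chineseRemainder hab
    refine ⟨e.symm (x₁, x₂), ?_⟩
    apply e.injective
    rw [map_zero]
    simp only [map_mul, map_sub, map_pow, map_ofNat, RingEquiv.apply_symm_apply]
    ext
    · simpa using hx₁
    · simpa using hx₂

theorem stmt_4 : ∀ m : ℕ, 1 ≤ m → ∃ n : ℤ,
    (m : ℤ) ∣ (n ^ 2 - 13) * (n ^ 2 - 17) * (n ^ 2 - 221) := by
  intro m hm
  haveI : NeZero m := ⟨by omega⟩
  obtain ⟨x, hx⟩ := zmod_version m (by omega)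
  refine ⟨(x.val : ℤ), ?_⟩
  rw [← ZMod.intCast_zmod_eq_zero_iff_dvd]
  push_cast
  rw [ZMod.natCast_val, ZMod.cast_id]
  convert hx using 2 <;> push_cast <;> ring
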